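/- For every commutative ring A and every truncation set S, the image of the map Ψ_S : A^S → A^S defined by Ψ_S(a)_m = ∑_{n ∈ S, n ∣ m} n·a_n^{m/n} is an additive subgroup of A^S, and this subgroup is contained in X_S(A). -/

import Mathlib

/-- `S/n = {ν : νn ∈ S}`. -/
def truncDiv (S : Set ℕ) (n : ℕ) : Set ℕ := {ν | ν * n ∈ S}

/-- A truncation set: a nonempty set of positive integers closed under
taking positive divisors. -/
def IsTruncationSet (S : Set ℕ) : Prop :=
  S.Nonempty ∧ (∀ n ∈ S, 0 < n) ∧ ∀ n ∈ S, ∀ d : ℕ, d ∣ n → 0 < d → d ∈ S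

/-- Verschiebung `V_n : A^{S/n} → A^S`. -/
def Versch {A : Type*} [CommRing A] (S : Set ℕ) (n : ℕ)
    (a : truncDiv S n → A) : S → A :=
  fun μ =>
    if h : n ∣ μ.1 then
      (n : A) * a ⟨μ.1 / n, show μ.1 / n * n ∈ S by
        rw [Nat.div_mul_cancel h]; exact μ.2⟩
    else 0

/-- The product topology on `A^S`, `A` discrete. -/
def prodTop (S : Set ℕ) (A : Type*) : TopologicalSpace (S → A) :=
  @Pi.topologicalSpace S (fun _ => A) fun _ => ⊥

/-- `X_S(J)`: the topological closure of the additive subgroup of `A^S`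
generated by the elements `V_n⟨a⟩`, `n ∈ S`, `a ∈ J`. -/
def XS (S : Set ℕ) {A : Type*} [CommRing A] (J : Set A) : Set (S → A) :=
  @closure _ (prodTop S A)
    (AddSubgroup.closure
      {x | ∃ n ∈ S, ∃ a ∈ J, x = Versch S n fun ν => a ^ ν.1} : Set (S → A))

open Classical in
/-- `Ψ_S : A^S → A^S`, `Ψ_S(a)_m = ∑_{n ∈ S, n ∣ m} n·a_n^{m/n}`. -/
noncomputable def PsiS (S : Set ℕ) {A : Type*} [CommRing A] (a : S → A) :
    S → A :=
  fun m => ∑ n ∈ ((m : ℕ).divisors.filter (· ∈ S)).attach,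
    (n.1 : A) * (a ⟨n.1, (Finset.mem_filter.mp n.2).2⟩) ^ ((m : ℕ) / n.1)

section Aux

variable {B : Type*} [CommRing B]

open Classical in
/-- Generic ghost sum. -/
noncomputable def gho (S : Set ℕ) (x : ℕ → B) (m : ℕ) : B :=
  ∑ d ∈ m.divisors.filter (· ∈ S), (d : B) * x d ^ (m / d)

open Classical in
noncomputable def cfun (S : Set ℕ) (w : ℕ → B) (m : ℕ) : B :=
  if h : (m : B) ∣ (w m - ∑ d ∈ ((m.divisors.filter (· ∈ S)).erase m).attach,
      (d.1 : B) * (cfun S w d.1) ^ (m / d.1)) then h.choose else 0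
termination_by m
decreasing_by
  all_goals
    have hd := d.2
    rw [Finset.mem_erase, Finset.mem_filter, Nat.mem_divisors] at hd
    exact lt_of_le_of_ne (Nat.le_of_dvd (Nat.pos_of_ne_zero hd.2.1.2) hd.2.1.1) hd.1

theorem ghoG (S : Set ℕ) {p m : ℕ} (hp : p.Prime) (hm : m ≠ 0) (hpm : p ∣ m)
    (φ : B →+* B) (hφ : ∀ r : B, (p : B) ∣ φ r - r ^ p) (x : ℕ → B) :
    (p : B) ^ (m.factorization p) ∣ gho S x m - φ (gho S x (m / p)) := by
  classical
  set v := m.factorization p with hv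
  set m' := m / p with hm'def
  have hmm' : m = p * m' := (Nat.mul_div_cancel' hpm).symm
  have hm'0 : m' ≠ 0 := by
    rw [hm'def]
    exact (Nat.div_ne_zero_iff).mpr ⟨hp.pos.ne', Nat.le_of_dvd (Nat.pos_of_ne_zero hm) hpm⟩
  have hv1 : 1 ≤ v := (hp.factorization_pos_of_dvd hm hpm)
  have hvm' : m'.factorization p = v - 1 := by
    rw [hm'def, Nat.factorization_div hpm, hv]
    simp [hp.factorization]
  -- key pow lemma
  have hφ' : ∀ (r : B) (k : ℕ), (p : B) ^ (k.factorization p + 1) ∣ r ^ (p * k) - φ r ^ k := by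
    intro r k
    rcases eq_or_ne k 0 with rfl | hk
    · simp
    set j := k.factorization p with hj
    obtain ⟨u, hu⟩ : p ^ j ∣ k := Nat.ordProj_dvd k p
    have h1 : (p : B) ^ (j + 1) ∣ (r ^ p) ^ p ^ j - (φ r) ^ p ^ j := by
      apply dvd_sub_pow_of_dvd_sub
      have := hφ r
      rw [← dvd_neg] at this
      simpa using this
    have h2 : (r ^ p) ^ p ^ j - (φ r) ^ p ^ j ∣
        ((r ^ p) ^ p ^ j) ^ u - ((φ r) ^ p ^ j) ^ u := sub_dvd_pow_sub_pow _ _ u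
    have e1 : r ^ (p * k) = ((r ^ p) ^ p ^ j) ^ u := by
      rw [← pow_mul, ← pow_mul, hu]
    have e2 : φ r ^ k = ((φ r) ^ p ^ j) ^ u := by rw [← pow_mul, hu]
    rw [e1, e2]
    exact h1.trans h2
  -- split the sums
  set D : Finset ℕ := m.divisors.filter (· ∈ S) with hD
  set D' : Finset ℕ := m'.divisors.filter (· ∈ S) with hD'
  have hsub : D' ⊆ D :=
    Finset.filter_subset_filter _ (Nat.divisors_subset_of_dvd hm (Nat.div_dvd_of_dvd hpm))
  have hsplit : gho S x m - φ (gho S x m') =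
      (∑ d ∈ D', ((d : B) * x d ^ (m / d) - (d : B) * φ (x d) ^ (m' / d))) +
        ∑ d ∈ D \ D', (d : B) * x d ^ (m / d) := by
    have h1 : φ (gho S x m') = ∑ d ∈ D', (d : B) * φ (x d) ^ (m' / d) := by
      rw [gho, map_sum]
      simp
      rfl
    have h2 : gho S x m = ∑ d ∈ D, (d : B) * x d ^ (m / d) := by
      rw [gho]
    rw [h1, h2, ← Finset.sum_sdiff hsub, Finset.sum_sub_distrib]
    ring
  rw [hsplit]
  apply dvd_add
  · apply Finset.dvd_sum
    intro d hd
    have hdm' : d ∣ m' := (Nat.mem_divisors.mp (Finset.mem_filter.mp hd).1).1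
    have hd0 : d ≠ 0 := (Nat.pos_of_mem_divisors (Finset.mem_filter.mp hd).1).ne'
    have hq0 : m' / d ≠ 0 :=
      (Nat.div_pos (Nat.le_of_dvd (Nat.pos_of_ne_zero hm'0) hdm') (Nat.pos_of_ne_zero hd0)).ne'
    have hmd : m / d = p * (m' / d) := by rw [hmm', Nat.mul_div_assoc p hdm']
    have hexp : d.factorization p + ((m' / d).factorization p + 1) = v := by
      have : m' = d * (m' / d) := (Nat.mul_div_cancel' hdm').symm
      have hfac : d.factorization p + (m' / d).factorization p = m'.factorization p := by
        conv_rhs => rw [this]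
        rw [Nat.factorization_mul hd0 hq0]; rfl
      omega
    have hdvd1 : (p : B) ^ d.factorization p ∣ (d : B) := by
      have : ((p ^ d.factorization p : ℕ) : B) ∣ ((d : ℕ) : B) :=
        Nat.cast_dvd_cast (Nat.ordProj_dvd d p)
      push_cast at this
      exact this
    have : (d : B) * x d ^ (m / d) - (d : B) * φ (x d) ^ (m' / d) =
        (d : B) * (x d ^ (p * (m' / d)) - φ (x d) ^ (m' / d)) := by rw [hmd]; ring
    rw [this, ← hexp, pow_add]
    exact mul_dvd_mul hdvd1 (hφ' (x d) (m' / d))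
  · apply Finset.dvd_sum
    intro d hd
    rw [Finset.mem_sdiff] at hd
    obtain ⟨hdD, hdD'⟩ := hd
    have hdm : d ∣ m := (Nat.mem_divisors.mp (Finset.mem_filter.mp hdD).1).1
    have hdS : d ∈ S := (Finset.mem_filter.mp hdD).2
    have hd0 : d ≠ 0 := (Nat.pos_of_mem_divisors (Finset.mem_filter.mp hdD).1).ne'
    have hndm' : ¬ d ∣ m' := by
      intro hdm'
      exact hdD' (Finset.mem_filter.mpr ⟨Nat.mem_divisors.mpr ⟨hdm', hm'0⟩, hdS⟩)
    have hvd : v ≤ d.factorization p := by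
      by_contra hlt
      push_neg at hlt
      apply hndm'
      rw [← Nat.factorization_le_iff_dvd hd0 hm'0, Finsupp.le_def]
      intro q
      rcases eq_or_ne q p with rfl | hq
      · rw [hvm']; omega
      · have e : m'.factorization q = m.factorization q := by
          rw [hm'def, Nat.factorization_div hpm, Finsupp.tsub_apply]
          simp [hp.factorization, Finsupp.single_apply, Ne.symm hq]
        rw [e]
        exact Finsupp.le_def.mp ((Nat.factorization_le_iff_dvd hd0 hm).mpr hdm) q
    have hdvd1 : (p : B) ^ v ∣ (d : B) := by
      refine (pow_dvd_pow (p : B) hvd).trans ?_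
      have : ((p ^ d.factorization p : ℕ) : B) ∣ ((d : ℕ) : B) :=
        Nat.cast_dvd_cast (Nat.ordProj_dvd d p)
      push_cast at this
      exact this
    exact hdvd1.trans (dvd_mul_right _ _)

open Classical in
theorem cfun_spec (S : Set ℕ) (hS : IsTruncationSet S) (w : ℕ → B)
    (φ : ℕ → B →+* B) (hφ : ∀ p : ℕ, p.Prime → ∀ r : B, (p : B) ∣ φ p r - r ^ p)
    (hcomb : ∀ m : ℕ, m ≠ 0 → ∀ z : B,
      (∀ p : ℕ, p.Prime → p ∣ m → (p : B) ^ (m.factorization p) ∣ z) → (m : B) ∣ z)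
    (hw : ∀ p : ℕ, p.Prime → ∀ m ∈ S, p ∣ m →
      (p : B) ^ (m.factorization p) ∣ w m - φ p (w (m / p))) :
    ∀ m ∈ S, gho S (cfun S w) m = w m := by
  intro m
  induction m using Nat.strong_induction_on with
  | _ m IH =>
  intro hmS
  have hm0 : m ≠ 0 := (hS.2.1 m hmS).ne'
  have hPP : (∑ d ∈ ((m.divisors.filter (· ∈ S)).erase m).attach,
        (d.1 : B) * (cfun S w d.1) ^ (m / d.1)) =
      ∑ d ∈ (m.divisors.filter (· ∈ S)).erase m, (d : B) * (cfun S w d) ^ (m / d) :=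
    Finset.sum_attach _ fun d : ℕ => (d : B) * (cfun S w d) ^ (m / d)
  have hmem : m ∈ m.divisors.filter (· ∈ S) :=
    Finset.mem_filter.mpr ⟨Nat.mem_divisors_self m hm0, hmS⟩
  have hgho : gho S (cfun S w) m = (m : B) * cfun S w m +
      ∑ d ∈ (m.divisors.filter (· ∈ S)).erase m, (d : B) * (cfun S w d) ^ (m / d) := by
    rw [gho, ← Finset.add_sum_erase _ _ hmem, Nat.div_self (Nat.pos_of_ne_zero hm0), pow_one]
  have hdvd : (m : B) ∣ (w m - ∑ d ∈ ((m.divisors.filter (· ∈ S)).erase m).attach,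
      (d.1 : B) * (cfun S w d.1) ^ (m / d.1)) := by
    rw [hPP]
    apply hcomb m hm0
    intro p hp hpm
    have hm'S : m / p ∈ S := hS.2.2 m hmS (m / p) (Nat.div_dvd_of_dvd hpm)
      (Nat.div_pos (Nat.le_of_dvd (Nat.pos_of_ne_zero hm0) hpm) hp.pos)
    have hlt : m / p < m := Nat.div_lt_self (Nat.pos_of_ne_zero hm0) hp.one_lt
    have h1 := hw p hp m hmS hpm
    have h2 := ghoG S hp hm0 hpm (φ p) (hφ p hp) (cfun S w)
    have h3 : (p : B) ^ (m.factorization p) ∣ (m : B) * cfun S w m := by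
      have h4 : ((p ^ m.factorization p : ℕ) : B) ∣ ((m : ℕ) : B) :=
        Nat.cast_dvd_cast (Nat.ordProj_dvd m p)
      push_cast at h4
      exact h4.mul_right _
    have hIH : gho S (cfun S w) (m / p) = w (m / p) := IH (m / p) hlt hm'S
    have key : w m - ∑ d ∈ (m.divisors.filter (· ∈ S)).erase m,
        (d : B) * (cfun S w d) ^ (m / d) =
        (w m - φ p (w (m / p))) + -(gho S (cfun S w) m - φ p (gho S (cfun S w) (m / p)))
          + (m : B) * cfun S w m := by
      rw [hIH, hgho]; ring
    rw [key]
    exact dvd_add (dvd_add h1 (dvd_neg.mpr h2)) h3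
  have hcm : (m : B) * cfun S w m = w m - ∑ d ∈ ((m.divisors.filter (· ∈ S)).erase m).attach,
      (d.1 : B) * (cfun S w d.1) ^ (m / d.1) := by
    conv_lhs => rw [cfun]
    rw [dif_pos hdvd]
    exact hdvd.choose_spec.symm
  rw [hgho, ← hPP, hcm]
  ring

open Classical in
theorem hcombR {σ : Type*} (m : ℕ) (hm : m ≠ 0) (z : MvPolynomial σ ℤ)
    (h : ∀ p : ℕ, p.Prime → p ∣ m →
      ((p : MvPolynomial σ ℤ)) ^ (m.factorization p) ∣ z) :
    (m : MvPolynomial σ ℤ) ∣ z := by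
  have hco : ∀ i, (m : ℤ) ∣ z.coeff i := by
    intro i
    rw [Int.natCast_dvd]
    rcases eq_or_ne (z.coeff i).natAbs 0 with h0 | h0
    · simp [h0]
    rw [← Nat.factorization_le_iff_dvd hm h0, Finsupp.le_def]
    intro p
    by_cases hp : p.Prime ∧ p ∣ m
    · have h1 := h p hp.1 hp.2
      have h2 : MvPolynomial.C ((p : ℤ) ^ m.factorization p) ∣ z := by
        rw [map_pow, MvPolynomial.C_eq_coe_nat]
        exact_mod_cast h1
      have h3 : (p : ℤ) ^ m.factorization p ∣ z.coeff i :=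
        (MvPolynomial.C_dvd_iff_dvd_coeff _ _).mp h2 i
      have h4 : p ^ m.factorization p ∣ (z.coeff i).natAbs := by
        rw [← Int.natCast_dvd]; exact_mod_cast h3
      exact (Nat.Prime.pow_dvd_iff_le_factorization hp.1 h0).mp h4
    · have h5 : m.factorization p = 0 := by
        rcases not_and_or.mp hp with h1 | h1
        · exact Nat.factorization_eq_zero_of_not_prime m h1
        · exact Nat.factorization_eq_zero_of_not_dvd h1
      simp [h5]
  rw [← MvPolynomial.C_eq_coe_nat]
  exact (MvPolynomial.C_dvd_iff_dvd_coeff _ _).mpr hco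

open Classical in
theorem gho_congr (S : Set ℕ) {x y : ℕ → B} (h : ∀ n ∈ S, x n = y n) (m : ℕ) :
    gho S x m = gho S y m := by
  rw [gho, gho]
  exact Finset.sum_congr rfl fun d hd => by
    rw [h d (Finset.mem_filter.mp hd).2]

theorem gho_map {C : Type*} [CommRing C] (f : B →+* C) (S : Set ℕ) (x : ℕ → B) (m : ℕ) :
    f (gho S x m) = gho S (fun n => f (x n)) m := by
  rw [gho, gho, map_sum]
  exact Finset.sum_congr rfl fun d _ => by rw [map_mul, map_pow, map_natCast]

theorem frobR {σ : Type*} (p : ℕ) (hp : p.Prime) (r : MvPolynomial σ ℤ) :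
    (p : MvPolynomial σ ℤ) ∣ (MvPolynomial.expand p).toRingHom r - r ^ p := by
  haveI : Fact p.Prime := ⟨hp⟩
  show (p : MvPolynomial σ ℤ) ∣ MvPolynomial.expand p r - r ^ p
  rw [← MvPolynomial.C_eq_coe_nat, MvPolynomial.C_dvd_iff_zmod, map_sub, sub_eq_zero,
    map_pow, MvPolynomial.map_expand, MvPolynomial.expand_zmod]

/-- Every Dwork-compatible ghost vector over `MvPolynomial σ ℤ` is in the image. -/
theorem exists_gho {σ : Type*} (S : Set ℕ) (hS : IsTruncationSet S)
    (w : ℕ → MvPolynomial σ ℤ)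
    (hw : ∀ p : ℕ, p.Prime → ∀ m ∈ S, p ∣ m →
      (p : MvPolynomial σ ℤ) ^ (m.factorization p) ∣
        w m - (MvPolynomial.expand p).toRingHom (w (m / p))) :
    ∃ c : ℕ → MvPolynomial σ ℤ, ∀ m ∈ S, gho S c m = w m :=
  ⟨cfun S w, cfun_spec S hS w (fun p => (MvPolynomial.expand p).toRingHom)
    (fun p hp r => frobR p hp r) hcombR hw⟩

open Classical in
noncomputable def ext0 {A : Type*} [CommRing A] (S : Set ℕ) (a : S → A) : ℕ → A :=
  fun n => if h : n ∈ S then a ⟨n, h⟩ else 0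

open Classical in
theorem PsiS_apply_eq {A : Type*} [CommRing A] (S : Set ℕ) (a : S → A) (m : S) :
    PsiS S a m = gho S (ext0 S a) m.1 := by
  rw [PsiS, gho]
  have h1 : ∀ n ∈ ((m : ℕ).divisors.filter (· ∈ S)).attach,
      (n.1 : A) * (a ⟨n.1, (Finset.mem_filter.mp n.2).2⟩) ^ ((m : ℕ) / n.1) =
      (n.1 : A) * (ext0 S a n.1) ^ ((m : ℕ) / n.1) := by
    intro n _
    rw [ext0, dif_pos (Finset.mem_filter.mp n.2).2]
  rw [Finset.sum_congr rfl h1]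
  exact Finset.sum_attach _ fun n : ℕ => (n : A) * (ext0 S a n) ^ ((m : ℕ) / n)

theorem psi_addc {A : Type*} [CommRing A] (S : Set ℕ) (hS : IsTruncationSet S) (a b : S → A) :
    ∃ c : S → A, PsiS S c = PsiS S a + PsiS S b := by
  classical
  have hw : ∀ p : ℕ, p.Prime → ∀ m ∈ S, p ∣ m →
      (p : MvPolynomial (ℕ ⊕ ℕ) ℤ) ^ (m.factorization p) ∣
        (gho S (fun n => MvPolynomial.X (Sum.inl n)) m
          + gho S (fun n => MvPolynomial.X (Sum.inr n)) m)
        - (MvPolynomial.expand p).toRingHom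
            (gho S (fun n => MvPolynomial.X (Sum.inl n)) (m / p)
              + gho S (fun n => MvPolynomial.X (Sum.inr n)) (m / p)) := by
    intro p hp m hmS hpm
    have hm0 : m ≠ 0 := (hS.2.1 m hmS).ne'
    have h1 := ghoG S hp hm0 hpm
      (MvPolynomial.expand (R := ℤ) (σ := ℕ ⊕ ℕ) p).toRingHom (frobR p hp)
      (fun n => MvPolynomial.X (Sum.inl n))
    have h2 := ghoG S hp hm0 hpm
      (MvPolynomial.expand (R := ℤ) (σ := ℕ ⊕ ℕ) p).toRingHom (frobR p hp)
      (fun n => MvPolynomial.X (Sum.inr n))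
    rw [map_add]
    have key := dvd_add h1 h2
    rw [show (gho S (fun n => MvPolynomial.X (Sum.inl n)) m
          - (MvPolynomial.expand p).toRingHom
              (gho S (fun n => (MvPolynomial.X (Sum.inl n) : MvPolynomial (ℕ ⊕ ℕ) ℤ)) (m / p)))
        + (gho S (fun n => MvPolynomial.X (Sum.inr n)) m
          - (MvPolynomial.expand p).toRingHom
              (gho S (fun n => MvPolynomial.X (Sum.inr n)) (m / p)))
        = (gho S (fun n => MvPolynomial.X (Sum.inl n)) m
            + gho S (fun n => MvPolynomial.X (Sum.inr n)) m)
          - ((MvPolynomial.expand p).toRingHom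
              (gho S (fun n => MvPolynomial.X (Sum.inl n)) (m / p))
            + (MvPolynomial.expand p).toRingHom
              (gho S (fun n => MvPolynomial.X (Sum.inr n)) (m / p))) from by ring] at key
    exact key
  obtain ⟨c₀, hc₀⟩ := exists_gho S hS _ hw
  set f : MvPolynomial (ℕ ⊕ ℕ) ℤ →+* A :=
    (MvPolynomial.aeval (Sum.elim (ext0 S a) (ext0 S b))).toRingHom with hf
  refine ⟨fun m => f (c₀ m.1), ?_⟩
  funext m
  have h1 : PsiS S (fun m : S => f (c₀ m.1)) m = gho S (fun n => f (c₀ n)) m.1 := by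
    rw [PsiS_apply_eq]
    exact gho_congr S (fun n hn => by rw [ext0, dif_pos hn]) m.1
  rw [Pi.add_apply, h1, ← gho_map, hc₀ m.1 m.2, map_add, gho_map, gho_map,
    PsiS_apply_eq S a m, PsiS_apply_eq S b m]
  congr 1
  · exact gho_congr S (fun n _ => by rw [hf]; simp) m.1
  · exact gho_congr S (fun n _ => by rw [hf]; simp) m.1

theorem psi_negc {A : Type*} [CommRing A] (S : Set ℕ) (hS : IsTruncationSet S) (a : S → A) :
    ∃ c : S → A, PsiS S c = - PsiS S a := by
  classical
  have hw : ∀ p : ℕ, p.Prime → ∀ m ∈ S, p ∣ m →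
      (p : MvPolynomial ℕ ℤ) ^ (m.factorization p) ∣
        (- gho S MvPolynomial.X m)
        - (MvPolynomial.expand p).toRingHom (- gho S MvPolynomial.X (m / p)) := by
    intro p hp m hmS hpm
    have hm0 : m ≠ 0 := (hS.2.1 m hmS).ne'
    have h1 := ghoG S hp hm0 hpm
      (MvPolynomial.expand (R := ℤ) (σ := ℕ) p).toRingHom (frobR p hp)
      MvPolynomial.X
    rw [map_neg]
    rw [show (- gho S MvPolynomial.X m) - -(MvPolynomial.expand p).toRingHom
        ((gho S (MvPolynomial.X : ℕ → MvPolynomial ℕ ℤ) (m / p)))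
        = -(gho S MvPolynomial.X m - (MvPolynomial.expand p).toRingHom
            (gho S MvPolynomial.X (m / p))) from by ring]
    exact dvd_neg.mpr h1
  obtain ⟨c₀, hc₀⟩ := exists_gho S hS _ hw
  set f : MvPolynomial ℕ ℤ →+* A := (MvPolynomial.aeval (ext0 S a)).toRingHom with hf
  refine ⟨fun m => f (c₀ m.1), ?_⟩
  funext m
  have h1 : PsiS S (fun m : S => f (c₀ m.1)) m = gho S (fun n => f (c₀ n)) m.1 := by
    rw [PsiS_apply_eq]
    exact gho_congr S (fun n hn => by rw [ext0, dif_pos hn]) m.1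
  rw [Pi.neg_apply, h1, ← gho_map, hc₀ m.1 m.2, map_neg, gho_map,
    PsiS_apply_eq S a m]
  exact congrArg Neg.neg (gho_congr S (fun n _ => by rw [hf]; simp) m.1)

theorem psi_zero {A : Type*} [CommRing A] (S : Set ℕ) :
    PsiS S (0 : S → A) = 0 := by
  classical
  funext m
  rw [PsiS, Pi.zero_apply]
  apply Finset.sum_eq_zero
  intro n _
  have hd := Finset.mem_filter.mp n.2
  have h1 := Nat.mem_divisors.mp hd.1
  have hpos : 0 < (m : ℕ) / n.1 :=
    Nat.div_pos (Nat.le_of_dvd (Nat.pos_of_ne_zero h1.2) h1.1) (Nat.pos_of_mem_divisors hd.1)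
  rw [Pi.zero_apply, zero_pow hpos.ne', mul_zero]

open Classical in
theorem psi_mem_XS {A : Type*} [CommRing A] (S : Set ℕ) (hS : IsTruncationSet S) (a : S → A) :
    PsiS S a ∈ XS S (Set.univ : Set A) := by
  classical
  letI : TopologicalSpace A := ⊥
  have main : PsiS S a ∈ closure ((AddSubgroup.closure
      {x | ∃ n ∈ S, ∃ c ∈ (Set.univ : Set A), x = Versch S n fun ν => c ^ ν.1}
        : AddSubgroup (S → A)) : Set (S → A)) := by
    rw [mem_closure_iff]
    intro o ho hxo
    obtain ⟨I, u, hu, hsub⟩ := isOpen_pi_iff.mp ho _ hxo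
    set T : Finset ℕ := I.biUnion (fun i => (Nat.divisors i.1).filter (· ∈ S)) with hT
    have hTS : ∀ n ∈ T, n ∈ S := by
      intro n hn
      rw [hT, Finset.mem_biUnion] at hn
      obtain ⟨i, _, hi⟩ := hn
      exact (Finset.mem_filter.mp hi).2
    refine ⟨∑ n ∈ T, Versch S n (fun ν => (ext0 S a n) ^ ν.1), ?_, ?_⟩
    · apply hsub
      intro i hi
      have hi' : i ∈ I := hi
      have hy : (∑ n ∈ T, Versch S n (fun ν => (ext0 S a n) ^ ν.1)) i = PsiS S a i := by
        rw [Finset.sum_apply]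
        have hstep : ∀ n ∈ T, Versch S n (fun ν => (ext0 S a n) ^ ν.1) i
            = if n ∣ i.1 then (n : A) * (ext0 S a n) ^ (i.1 / n) else 0 := by
          intro n _
          rw [Versch]
          split_ifs with h <;> rfl
        rw [Finset.sum_congr rfl hstep, ← Finset.sum_filter]
        have hset : T.filter (· ∣ i.1) = (i.1.divisors.filter (· ∈ S)) := by
          ext n
          simp only [Finset.mem_filter, hT, Finset.mem_biUnion, Nat.mem_divisors]
          constructor
          · rintro ⟨⟨j, hj, hnj⟩, hdvd⟩
            exact ⟨⟨hdvd, (hS.2.1 i.1 i.2).ne'⟩, hnj.2⟩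
          · rintro ⟨⟨hdvd, h0⟩, hnS⟩
            exact ⟨⟨i, hi', ⟨⟨hdvd, h0⟩, hnS⟩⟩, hdvd⟩
        rw [hset, PsiS_apply_eq S a i, gho]
      rw [hy]
      exact (hu i hi').2
    · exact AddSubgroup.sum_mem _ fun n hn =>
        AddSubgroup.subset_closure ⟨n, hTS n hn, ext0 S a n, Set.mem_univ _, rfl⟩
  exact main

end Aux


/-- For every commutative ring `A` and truncation set `S`, the image of
`Ψ_S` is an additive subgroup of `A^S` contained in `X_S(A)`. -/
theorem statement4 {A : Type*} [CommRing A] (S : Set ℕ)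
    (hS : IsTruncationSet S) :
    (∃ G : AddSubgroup (S → A),
      (G : Set (S → A)) = Set.range (PsiS S (A := A))) ∧
    Set.range (PsiS S (A := A)) ⊆ XS S (Set.univ : Set A) := by
  constructor
  · refine ⟨⟨⟨⟨Set.range (PsiS S), ?_⟩, ⟨0, psi_zero S⟩⟩, ?_⟩, rfl⟩
    · rintro x y ⟨a, rfl⟩ ⟨b, rfl⟩
      obtain ⟨c, hc⟩ := psi_addc S hS a b
      exact ⟨c, hc⟩
    · rintro x ⟨a, rfl⟩
      obtain ⟨c, hc⟩ := psi_negc S hS a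
      exact ⟨c, hc⟩
  · rintro x ⟨a, rfl⟩
    exact psi_mem_XS S hS a
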